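/- arXiv:1412.6610 — 3 statements merged into one kernel-verified Lean document; each statement's English description precedes it below -/
import Mathlib

section
/- For the gated auto-encoder decoder r(y|x) = (W^Y)^T((W^X x) ⊙ (W^H)^T h(W^H((W^X x) ⊙ (W^Y y)))), with h continuously differentiable, the vector field F(y) = r(y|x) - y satisfies Poincaré's integrability criterion: ∂F_i/∂y_j = ∂F_j/∂y_i for all i,j. -/
/-- Poincaré integrability criterion for the GAE vector field
`F(y) = r(y|x) - y`, where
`r(y|x) = (Wʸ)ᵀ((Wˣx) ⊙ (Wʰ)ᵀ h(Wʰ((Wˣx) ⊙ (Wʸy))))` and `h` is an elementwise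
continuously differentiable activation. -/
theorem gae_jacobian_symmetric
    (Fn D M : ℕ)
    (WX WY : Matrix (Fin Fn) (Fin D) ℝ) (WH : Matrix (Fin M) (Fin Fn) ℝ)
    (x : Fin D → ℝ) (h : ℝ → ℝ) (hh : ContDiff ℝ 1 h)
    (r : (Fin D → ℝ) → (Fin D → ℝ))
    (hr : ∀ y, r y = WY.transpose.mulVec
      ((WX.mulVec x) * WH.transpose.mulVec
        (fun m => h (WH.mulVec ((WX.mulVec x) * (WY.mulVec y)) m))))
    (F : (Fin D → ℝ) → (Fin D → ℝ))
    (hF : ∀ y, F y = r y - y) :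
    ∀ (y : Fin D → ℝ) (i j : Fin D),
      fderiv ℝ F y (Pi.single j 1) i = fderiv ℝ F y (Pi.single i 1) j := by
  intro y i j
  set a : Fin Fn → ℝ := WX.mulVec x with ha
  set B : Matrix (Fin M) (Fin D) ℝ := WH * Matrix.diagonal a * WY with hB
  have hdiag : ∀ (v : Fin Fn → ℝ), (Matrix.diagonal a).mulVec v = a * v := by
    intro v; funext k; simp [Matrix.mulVec_diagonal]
  have hBv : ∀ z, B.mulVec z = WH.mulVec (a * WY.mulVec z) := by
    intro z
    rw [hB, ← Matrix.mulVec_mulVec, ← Matrix.mulVec_mulVec, hdiag]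
  have hBTv : ∀ w, B.transpose.mulVec w = WY.transpose.mulVec (a * WH.transpose.mulVec w) := by
    intro w
    rw [hB, Matrix.transpose_mul, Matrix.transpose_mul,
      ← Matrix.mulVec_mulVec, ← Matrix.mulVec_mulVec, Matrix.diagonal_transpose, hdiag]
  have hFeq : F = fun z => B.transpose.mulVec (fun m => h (B.mulVec z m)) - z := by
    funext z
    rw [hF, hr, ← hBTv]
    congr 2
    funext m
    rw [hBv]
  -- CLMs
  let P : (Fin D → ℝ) →L[ℝ] (Fin M → ℝ) := (Matrix.mulVecLin B).toContinuousLinearMap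
  let T : (Fin M → ℝ) →L[ℝ] (Fin D → ℝ) := (Matrix.mulVecLin B.transpose).toContinuousLinearMap
  have hG : HasFDerivAt (fun z => (fun m => h (B.mulVec z m)))
      (ContinuousLinearMap.pi fun m =>
        deriv h (B.mulVec y m) • ((ContinuousLinearMap.proj m).comp P)) y := by
    apply hasFDerivAt_pi.2
    intro m
    have h1 : HasFDerivAt (fun z : Fin D → ℝ => B.mulVec z m)
        ((ContinuousLinearMap.proj m).comp P) y :=
      ((ContinuousLinearMap.proj m).comp P).hasFDerivAt
    have h2 : HasDerivAt h (deriv h (B.mulVec y m)) (B.mulVec y m) :=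
      ((hh.differentiable one_ne_zero) (B.mulVec y m)).hasDerivAt
    exact h2.comp_hasFDerivAt y h1
  have hFd : HasFDerivAt F
      (T.comp (ContinuousLinearMap.pi fun m =>
        deriv h (B.mulVec y m) • ((ContinuousLinearMap.proj m).comp P))
        - ContinuousLinearMap.id ℝ (Fin D → ℝ)) y := by
    rw [hFeq]
    exact (T.hasFDerivAt.comp y hG).sub (hasFDerivAt_id y)
  rw [hFd.fderiv]
  have hT : ∀ (w : Fin M → ℝ) (k : Fin D), T w k = ∑ m, B m k * w m := by
    intro w k
    simp [T, Matrix.mulVecLin_apply, Matrix.vecMul, dotProduct, Matrix.mulVec, Matrix.transpose_apply, mul_comm]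
  simp only [ContinuousLinearMap.sub_apply, ContinuousLinearMap.id_apply, Pi.sub_apply,
    ContinuousLinearMap.coe_comp', Function.comp_apply]
  rw [hT, hT]
  have hPi : ∀ (k : Fin D) (m : Fin M),
      (ContinuousLinearMap.pi fun m =>
        deriv h (B.mulVec y m) • ((ContinuousLinearMap.proj m).comp P)) (Pi.single k 1) m
      = deriv h (B.mulVec y m) * B m k := by
    intro k m
    simp [P, Matrix.mulVecLin_apply, Matrix.mulVec_single]
  simp only [hPi]
  have hs : (Pi.single j 1 : Fin D → ℝ) i = (Pi.single i 1 : Fin D → ℝ) j := by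
    simp [Pi.single_apply, eq_comm]
  rw [hs]
  congr 1
  exact Finset.sum_congr rfl fun m _ => by ring
end

section
/- Define E(y) = Σ_k H(u_k(y)) - ‖y‖²/2 where u(y) = W^H((W^Y y) ⊙ (W^X x)) and H is an antiderivative of the scalar activation h (i.e., H' = h). Then ∇_y E(y) = r(y|x) - y, where r(y|x) = (W^Y)^T((W^X x) ⊙ (W^H)^T h(u(y))). -/
/-- The GAE energy `E(y) = Σ_k H(u_k(y)) - ‖y‖²/2`, where `H` is an
antiderivative of the activation `h` and `u(y) = Wʰ((Wʸy) ⊙ (Wˣx))`, satisfies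
`∇E(y) = r(y|x) - y` with `r(y|x) = (Wʸ)ᵀ((Wˣx) ⊙ (Wʰ)ᵀ h(u(y)))`. -/
theorem gae_energy_gradient
    (Fn D M : ℕ)
    (WX WY : Matrix (Fin Fn) (Fin D) ℝ) (WH : Matrix (Fin M) (Fin Fn) ℝ)
    (x : Fin D → ℝ) (h H : ℝ → ℝ) (hcont : Continuous h)
    (hH : ∀ t, HasDerivAt H (h t) t)
    (u : EuclideanSpace ℝ (Fin D) → (Fin M → ℝ))
    (hu : ∀ y, u y = WH.mulVec ((WY.mulVec (fun i => y i)) * (WX.mulVec x)))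
    (r : EuclideanSpace ℝ (Fin D) → (Fin D → ℝ))
    (hr : ∀ y, r y = WY.transpose.mulVec
      ((WX.mulVec x) * WH.transpose.mulVec (fun m => h (u y m))))
    (E : EuclideanSpace ℝ (Fin D) → ℝ)
    (hE : ∀ y, E y = (∑ k, H (u y k)) - ‖y‖ ^ 2 / 2) :
    ∀ y : EuclideanSpace ℝ (Fin D),
      HasGradientAt E (WithLp.toLp 2 (fun i => r y i - y i : Fin D → ℝ) :
        EuclideanSpace ℝ (Fin D)) y := by
  intro y
  set Llin : EuclideanSpace ℝ (Fin D) →ₗ[ℝ] (Fin M → ℝ) :=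
    WH.mulVecLin ∘ₗ (LinearMap.mulRight ℝ (WX.mulVec x)) ∘ₗ WY.mulVecLin ∘ₗ
      (WithLp.linearEquiv 2 ℝ (Fin D → ℝ)).toLinearMap with hLlin
  set L : EuclideanSpace ℝ (Fin D) →L[ℝ] (Fin M → ℝ) := Llin.toContinuousLinearMap with hL
  have hLapp : ∀ z : EuclideanSpace ℝ (Fin D),
      L z = WH.mulVec ((WY.mulVec (fun i => z i)) * (WX.mulVec x)) := by
    intro z
    simp [hL, hLlin, LinearMap.mulRight_apply]
  have huL : ∀ z, u z = L z := by intro z; rw [hu, hLapp]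
  -- derivative of the summed antiderivative part
  have hsum : HasFDerivAt (fun z : Fin M → ℝ => ∑ k, H (z k))
      (∑ k, h (u y k) • (ContinuousLinearMap.proj k :
        (Fin M → ℝ) →L[ℝ] ℝ)) (L y) := by
    rw [← huL]
    apply HasFDerivAt.fun_sum
    intro k _
    exact (hH ((u y) k)).comp_hasFDerivAt (u y)
      (ContinuousLinearMap.proj k : (Fin M → ℝ) →L[ℝ] ℝ).hasFDerivAt
  have hcomp : HasFDerivAt (fun z : EuclideanSpace ℝ (Fin D) => ∑ k, H (u z k))
      ((∑ k, h (u y k) • (ContinuousLinearMap.proj k :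
        (Fin M → ℝ) →L[ℝ] ℝ)).comp L) y := by
    have h2 := hsum.comp y L.hasFDerivAt
    refine h2.congr_of_eventuallyEq (Filter.Eventually.of_forall fun z => ?_)
    simp [huL, Function.comp]
  have hnorm : HasFDerivAt (fun z : EuclideanSpace ℝ (Fin D) => ‖z‖ ^ 2 / 2)
      (innerSL ℝ y) y := by
    have h2 := (hasFDerivAt_id y).norm_sq.const_smul ((2 : ℝ)⁻¹)
    refine (h2.congr_of_eventuallyEq (Filter.Eventually.of_forall fun z => ?_)).congr_fderiv ?_
    · simp [div_eq_inv_mul]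
    · ext v
      simp [two_smul]
      ring
  have hEderiv : HasFDerivAt E
      ((∑ k, h (u y k) • (ContinuousLinearMap.proj k :
        (Fin M → ℝ) →L[ℝ] ℝ)).comp L - innerSL ℝ y) y := by
    have h3 := hcomp.sub hnorm
    have hEfun : E = fun z => (∑ k, H (u z k)) - ‖z‖ ^ 2 / 2 := funext hE
    rw [hEfun]
    exact h3
  rw [hasGradientAt_iff_hasFDerivAt]
  refine hEderiv.congr_fderiv ?_
  symm
  ext v
  simp only [InnerProductSpace.toDual_apply_apply, PiLp.inner_apply, RCLike.inner_apply,
    conj_trivial, ContinuousLinearMap.coe_sub', Pi.sub_apply,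
    ContinuousLinearMap.coe_comp', Function.comp_apply, ContinuousLinearMap.coe_sum',
    Finset.sum_apply, ContinuousLinearMap.smul_apply, ContinuousLinearMap.proj_apply,
    smul_eq_mul, innerSL_apply_apply]
  rw [hLapp]
  simp only [mul_sub, sub_mul, Finset.sum_sub_distrib]
  congr 1
  · -- ∑ i, r y i * v i = ∑ k, h (u y k) * (WH *ᵥ ((WY *ᵥ v) * (WX *ᵥ x))) k
    have e1 : (∑ i, r y i * (v : Fin D → ℝ) i)
        = dotProduct (r y) (fun i => v i) := rfl
    have e2 : (∑ k, h (u y k) *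
          (WH.mulVec ((WY.mulVec (fun i => v i)) * (WX.mulVec x))) k)
        = dotProduct (fun m => h (u y m))
            (WH.mulVec ((WY.mulVec (fun i => v i)) * (WX.mulVec x))) := rfl
    have l1 : dotProduct
          (WY.transpose.mulVec ((WX.mulVec x) * WH.transpose.mulVec (fun m => h (u y m))))
          (fun i => v i)
        = dotProduct ((WX.mulVec x) * WH.transpose.mulVec (fun m => h (u y m)))
            (WY.mulVec (fun i => v i)) := by
      rw [Matrix.mulVec_transpose, ← Matrix.dotProduct_mulVec]
    have l2 : dotProduct (fun m => h (u y m))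
          (WH.mulVec ((WY.mulVec (fun i => v i)) * (WX.mulVec x)))
        = dotProduct (WH.transpose.mulVec (fun m => h (u y m)))
            ((WY.mulVec (fun i => v i)) * (WX.mulVec x)) := by
      rw [Matrix.dotProduct_mulVec, ← Matrix.mulVec_transpose]
    rw [Finset.sum_congr rfl fun i _ => mul_comm (v.ofLp i) (r y i)]
    rw [e1, e2, hr, l1, l2]
    simp only [dotProduct, Pi.mul_apply]
    exact Finset.sum_congr rfl fun f _ => by ring
end

section
/- For the symmetric gated auto-encoder with tied inputs and weights (covariance auto-encoder): r(x) = (W^F)^T((W^F x) ⊙ (W^H)^T σ(W^H((W^F x)²) + b)) + a, the vector field F(x) = r(x) - x is the gradient of E(x) = (1/2)Σ_k log(1 + exp((W^H(W^F x)²)_k + b_k)) - ‖x‖²/2 + a·x. -/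
noncomputable def sigmoid (t : ℝ) : ℝ := (1 + Real.exp (-t))⁻¹

lemma softplus_deriv (t : ℝ) :
    HasDerivAt (fun t => Real.log (1 + Real.exp t)) (sigmoid t) t := by
  have h1 : HasDerivAt (fun t => 1 + Real.exp t) (Real.exp t) t :=
    (Real.hasDerivAt_exp t).const_add 1
  have h2 := h1.log (by positivity)
  convert h2 using 1
  rw [sigmoid, Real.exp_neg, eq_div_iff (by positivity)]
  field_simp; ring

lemma lin_deriv {D : ℕ} (c : Fin D → ℝ) (x : EuclideanSpace ℝ (Fin D)) :
    HasFDerivAt (fun y : EuclideanSpace ℝ (Fin D) => ∑ i, c i * y i)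
      (∑ i, c i • (EuclideanSpace.proj i : EuclideanSpace ℝ (Fin D) →L[ℝ] ℝ)) x := by
  have h := (∑ i, c i • (EuclideanSpace.proj i : EuclideanSpace ℝ (Fin D) →L[ℝ] ℝ)).hasFDerivAt (x := x)
  apply h.congr_of_eventuallyEq
  filter_upwards with y
  simp

lemma swap_lemma {Fn M : ℕ} (A : Fin Fn → ℝ) (B : Fin M → Fin Fn → ℝ)
    (s : Fin M → ℝ) (c : Fin Fn → ℝ) :
    ∑ f, c f * (A f * ∑ k, B k f * s k)
      = 1 / 2 * ∑ k, s k * ∑ f, B k f * (A f * c f + A f * c f) := by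
  simp only [Finset.mul_sum]
  rw [Finset.sum_comm]
  refine Finset.sum_congr rfl fun k _ => Finset.sum_congr rfl fun f _ => by ring

/-- For the covariance auto-encoder
`r(x) = (Wᶠ)ᵀ((Wᶠx) ⊙ (Wʰ)ᵀ σ(Wʰ(Wᶠx)² + b)) + a`, the vector field
`F(x) = r(x) - x` is the gradient of
`E(x) = (1/2) Σ_k log(1 + exp((Wʰ(Wᶠx)²)_k + b_k)) - ‖x‖²/2 + a·x`. -/
theorem covariance_ae_vector_field_is_gradient
    (Fn D M : ℕ)
    (WF : Matrix (Fin Fn) (Fin D) ℝ) (WH : Matrix (Fin M) (Fin Fn) ℝ)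
    (a : Fin D → ℝ) (b : Fin M → ℝ)
    (r : EuclideanSpace ℝ (Fin D) → (Fin D → ℝ))
    (hr : ∀ x, r x = WF.transpose.mulVec
      ((WF.mulVec (fun i => x i)) * WH.transpose.mulVec
        (fun k => sigmoid ((WH.mulVec (fun f => ((WF.mulVec (fun i => x i)) f) ^ 2)) k
          + b k))) + a)
    (E : EuclideanSpace ℝ (Fin D) → ℝ)
    (hE : ∀ x, E x = (1 / 2) * (∑ k, Real.log (1 + Real.exp
        ((WH.mulVec (fun f => ((WF.mulVec (fun i => x i)) f) ^ 2)) k + b k)))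
        - ‖x‖ ^ 2 / 2 + ∑ i, a i * x i) :
    ∀ x : EuclideanSpace ℝ (Fin D),
      HasGradientAt E (WithLp.toLp 2 (fun i => r x i - x i : Fin D → ℝ) :
        EuclideanSpace ℝ (Fin D)) x := by
  intro x
  -- notation
  set pr : Fin D → (EuclideanSpace ℝ (Fin D) →L[ℝ] ℝ) :=
    fun i => EuclideanSpace.proj i with hpr
  set ℓ : Fin Fn → (EuclideanSpace ℝ (Fin D) →L[ℝ] ℝ) :=
    fun f => ∑ i, WF f i • pr i with hℓ
  set u : Fin Fn → ℝ := fun f => ∑ i, WF f i * x i with hu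
  set h : Fin M → ℝ := fun k => (∑ f, WH k f * (u f) ^ 2) + b k with hh
  -- E rewritten with explicit sums
  have hE' : E = fun y : EuclideanSpace ℝ (Fin D) =>
      (1 / 2) * (∑ k, Real.log (1 + Real.exp ((∑ f, WH k f * (∑ i, WF f i * y i) ^ 2) + b k)))
        - (1/2) * (∑ i, y i ^ 2) + ∑ i, a i * y i := by
    funext y
    rw [hE y]
    have hn : ‖y‖ ^ 2 = ∑ i, y i ^ 2 := by
      rw [EuclideanSpace.norm_eq, Real.sq_sqrt (by positivity)]
      simp [sq_abs]
    rw [hn]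
    simp only [Matrix.mulVec, dotProduct]
    ring
  rw [hE']
  -- the Fréchet derivative
  have key : HasFDerivAt (fun y : EuclideanSpace ℝ (Fin D) =>
      (1 / 2) * (∑ k, Real.log (1 + Real.exp ((∑ f, WH k f * (∑ i, WF f i * y i) ^ 2) + b k)))
        - (1/2) * (∑ i, y i ^ 2) + ∑ i, a i * y i)
      (((1/2 : ℝ) • ∑ k, sigmoid (h k) •
          (∑ f, WH k f • (u f • ℓ f + u f • ℓ f))
        - (1/2 : ℝ) • ∑ i, (x i • pr i + x i • pr i)) + ∑ i, a i • pr i) x := by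
    apply HasFDerivAt.add _ (lin_deriv a x)
    apply HasFDerivAt.sub
    · apply HasFDerivAt.const_mul
      apply HasFDerivAt.fun_sum
      intro k _
      have hk : HasFDerivAt (fun y : EuclideanSpace ℝ (Fin D) =>
          (∑ f, WH k f * (∑ i, WF f i * y i) ^ 2) + b k)
          (∑ f, WH k f • (u f • ℓ f + u f • ℓ f)) x := by
        apply HasFDerivAt.add_const
        apply HasFDerivAt.fun_sum
        intro f _
        apply HasFDerivAt.const_mul
        apply HasFDerivAt.congr_of_eventuallyEq
          ((lin_deriv (WF f) x).mul (lin_deriv (WF f) x))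
        filter_upwards with y using sq (∑ i, WF f i * y i) ▸ rfl
      exact (softplus_deriv (h k)).comp_hasFDerivAt x hk
    · apply HasFDerivAt.const_mul
      apply HasFDerivAt.fun_sum
      intro i _
      have : HasFDerivAt (fun y : EuclideanSpace ℝ (Fin D) => y i) (pr i) x :=
        (pr i).hasFDerivAt
      apply HasFDerivAt.congr_of_eventuallyEq (this.mul this)
      filter_upwards with y using sq (y i) ▸ rfl
  rw [hasGradientAt_iff_hasFDerivAt]
  refine key.congr_fderiv (Eq.symm ?_)
  refine ContinuousLinearMap.coe_injective ((EuclideanSpace.basisFun (Fin D) ℝ).toBasis.ext fun j => ?_)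
  simp only [EuclideanSpace.basisFun_toBasis, ContinuousLinearMap.coe_coe,
    InnerProductSpace.toDual_apply_apply, PiLp.inner_apply, RCLike.inner_apply, conj_trivial,
    ContinuousLinearMap.add_apply, ContinuousLinearMap.sub_apply, ContinuousLinearMap.smul_apply,
    ContinuousLinearMap.sum_apply, ContinuousLinearMap.coe_smul', Pi.smul_apply, hℓ, hpr, hh, hu,
    PiLp.proj_apply, smul_eq_mul, hr x, Matrix.mulVec, dotProduct,
    Matrix.transpose_apply, Pi.add_apply, Pi.mul_apply, EuclideanSpace.single_apply,
    PiLp.basisFun_apply, ite_mul, one_mul, zero_mul, Pi.single_apply,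
    mul_ite, mul_one, mul_zero, Finset.sum_ite_eq', Finset.mem_univ, if_true]
  rw [swap_lemma (fun f => ∑ i, WF f i * x i) (fun k f => WH k f)
    (fun k => sigmoid (∑ f, WH k f * (∑ i, WF f i * x i) ^ 2 + b k)) (fun f => WF f j)]
  have hx : ∑ i, ((if i = j then x i else 0) + if i = j then x i else 0) = x j + x j := by
    rw [Finset.sum_add_distrib]
    simp
  rw [hx]
  ring
end
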